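/- Let G be a finite simple graph, k ≥ 1 a natural number, and v a vertex of G with degree strictly greater than k. Then G has a vertex cover of size at most k if and only if G − v has a vertex cover of size at most k − 1. -/

import Mathlib

/-- `X` is a vertex cover of `G`: every edge has at least one endpoint in `X`. -/
def IsVC {V : Type*} (G : SimpleGraph V) (X : Set V) : Prop :=
  ∀ ⦃u w : V⦄, G.Adj u w → u ∈ X ∨ w ∈ X

/-- `G` has a vertex cover of size at most `k`. -/
def HasVC {V : Type*} (G : SimpleGraph V) (k : ℕ) : Prop :=
  ∃ X : Set V, IsVC G X ∧ X.ncard ≤ k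

theorem stmt_1 {V : Type*} [Fintype V] (G : SimpleGraph V) [DecidableRel G.Adj]
    (k : ℕ) (hk : 1 ≤ k) (v : V) (hv : k < G.degree v) :
    HasVC G k ↔ HasVC (G.induce {w : V | w ≠ v}) (k - 1) := by
  classical
  constructor
  · rintro ⟨X, hX, hcard⟩
    -- v must belong to X
    have hvX : v ∈ X := by
      by_contra hvX
      have hsub : (G.neighborSet v) ⊆ X := by
        intro w hw
        rcases hX hw with h | h
        · exact absurd h hvX
        · exact h
      have := Set.ncard_le_ncard hsub (Set.toFinite X)
      have hdeg : (G.neighborSet v).ncard = G.degree v := by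
        rw [← Nat.card_coe_set_eq, Nat.card_eq_fintype_card]
        exact G.card_neighborSet_eq_degree v
      omega
    refine ⟨Subtype.val ⁻¹' X, ?_, ?_⟩
    · intro a b hab
      have : G.Adj a.val b.val := hab
      exact hX this
    · have himg : (Subtype.val ⁻¹' X : Set {w : V | w ≠ v}).ncard
          = (X ∩ {w : V | w ≠ v}).ncard := by
        rw [← Set.ncard_image_of_injective _ Subtype.val_injective,
          Subtype.image_preimage_coe, Set.inter_comm]
      have heq : X ∩ {w : V | w ≠ v} = X \ {v} := by
        ext w; simp [Set.mem_diff]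
      have hd : (X \ {v}).ncard = X.ncard - 1 :=
        Set.ncard_diff_singleton_of_mem hvX
      rw [himg, heq, hd]
      omega
  · rintro ⟨Y, hY, hcard⟩
    refine ⟨insert v (Subtype.val '' Y), ?_, ?_⟩
    · intro a b hab
      by_cases ha : a = v
      · exact Or.inl (by simp [ha])
      by_cases hb : b = v
      · exact Or.inr (by simp [hb])
      · have : (G.induce {w : V | w ≠ v}).Adj ⟨a, ha⟩ ⟨b, hb⟩ := hab
        rcases hY this with h | h
        · exact Or.inl (Or.inr ⟨_, h, rfl⟩)
        · exact Or.inr (Or.inr ⟨_, h, rfl⟩)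
    · have h1 : (insert v (Subtype.val '' Y)).ncard ≤ (Subtype.val '' Y).ncard + 1 :=
        Set.ncard_insert_le _ _
      rw [Set.ncard_image_of_injective _ Subtype.val_injective] at h1
      omega
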